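/- Let φ_1, ..., φ_n be vectors in ℂ^d and let s ≥ 2 be an integer. If every subfamily {φ_i}_{i∈I} with |I| < s is linearly independent over ℂ, then every subfamily of outer products {φ_iφ_i*}_{i∈I} with |I| < 2s − 2 is linearly independent over ℝ in the space of d×d Hermitian matrices. Equivalently, if spark({φ_i}) ≥ s then spark({φ_iφ_i*}) ≥ 2s − 2. -/

import Mathlib

/-- The outer product `x x*` of a vector `x ∈ ℂ^d` with itself:
the `d × d` matrix whose `(j,k)` entry is `x j * conj (x k)`. -/
def outer {d : ℕ} (x : EuclideanSpace ℂ (Fin d)) : Matrix (Fin d) (Fin d) ℂ :=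
  Matrix.of fun j k => x j * starRingEnd ℂ (x k)

open scoped ComplexConjugate ComplexInnerProductSpace

/-- Quadratic form of a single outer product. -/
lemma outer_quadratic {d : ℕ} (y x : EuclideanSpace ℂ (Fin d)) :
    ∑ j, ∑ k, conj (x j) * outer y j k * x k
      = conj ⟪y, x⟫ * ⟪y, x⟫ := by
  simp only [outer, Matrix.of_apply, PiLp.inner_apply, RCLike.inner_apply, map_sum, map_mul,
    RingHomCompTriple.comp_apply, RingHom.id_apply, starRingEnd_self_apply, star_star]
  rw [Finset.sum_mul_sum]
  refine Finset.sum_congr rfl fun j _ => Finset.sum_congr rfl fun k _ => ?_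
  simp only [starRingEnd_apply, star_star]
  ring

/-- If a real combination of outer products vanishes, the corresponding combination of
squared inner products with any vector vanishes. -/
lemma quad_zero {d n : ℕ} (φ : Fin n → EuclideanSpace ℂ (Fin d)) (I : Finset (Fin n))
    (c : Fin n → ℝ) (hsum : ∑ i ∈ I, c i • outer (φ i) = 0)
    (x : EuclideanSpace ℂ (Fin d)) :
    ∑ i ∈ I, c i * Complex.normSq ⟪φ i, x⟫ = 0 := by
  have h0 : ∑ i ∈ I, (c i : ℂ) * (conj ⟪φ i, x⟫ * ⟪φ i, x⟫) = 0 := by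
    have : ∑ i ∈ I, (c i : ℂ) * ∑ j, ∑ k, conj (x j) * outer (φ i) j k * x k = 0 := by
      have h1 : ∑ i ∈ I, (c i : ℂ) * ∑ j, ∑ k, conj (x j) * outer (φ i) j k * x k
          = ∑ j, ∑ k, conj (x j) * ((∑ i ∈ I, c i • outer (φ i)) j k) * x k := by
        simp only [Matrix.sum_apply, Matrix.smul_apply, Finset.mul_sum, Finset.sum_mul]
        rw [Finset.sum_comm]
        refine Finset.sum_congr rfl fun j _ => ?_
        rw [Finset.sum_comm]
        refine Finset.sum_congr rfl fun k _ => Finset.sum_congr rfl fun i _ => ?_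
        simp only [Complex.real_smul]
        ring
      rw [h1, hsum]
      simp
    rw [← this]
    exact Finset.sum_congr rfl fun i _ => by rw [outer_quadratic]
  have h2 : ((∑ i ∈ I, c i * Complex.normSq ⟪φ i, x⟫ : ℝ) : ℂ) = 0 := by
    push_cast
    rw [← h0]
    refine Finset.sum_congr rfl fun i _ => ?_
    rw [← Complex.normSq_eq_conj_mul_self]
  exact_mod_cast h2

/-- Auxiliary: if the negative-coefficient set is small, there are no positive coefficients. -/
lemma aux_nonpos {d n : ℕ} (s : ℕ) (φ : Fin n → EuclideanSpace ℂ (Fin d))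
    (hspark : ∀ I : Finset (Fin n), I.card < s →
        LinearIndependent ℂ (fun i : I => φ i))
    (I : Finset (Fin n)) (c : Fin n → ℝ)
    (hsum : ∑ i ∈ I, c i • outer (φ i) = 0)
    (hN : (I.filter fun i => c i < 0).card + 1 < s) :
    ∀ j ∈ I, c j ≤ 0 := by
  intro j hj
  by_contra hcj
  push_neg at hcj
  set N := I.filter fun i => c i < 0 with hNdef
  set V := Submodule.span ℂ (φ '' ↑N) with hVdef
  have hmem : φ j ∈ V := by
    rw [← Submodule.orthogonal_orthogonal V]
    rw [Submodule.mem_orthogonal]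
    intro x hx
    have hxN : ∀ k ∈ N, ⟪φ k, x⟫ = 0 := fun k hk =>
      (Submodule.mem_orthogonal V x).mp hx _ (Submodule.subset_span ⟨k, hk, rfl⟩)
    have hq := quad_zero φ I c hsum x
    have hterm : ∀ i ∈ I, 0 ≤ c i * Complex.normSq ⟪φ i, x⟫ := by
      intro i hi
      rcases lt_or_ge (c i) 0 with h | h
      · rw [hxN i (Finset.mem_filter.mpr ⟨hi, h⟩)]
        simp
      · exact mul_nonneg h (Complex.normSq_nonneg _)
    have hj0 : c j * Complex.normSq ⟪φ j, x⟫ = 0 :=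
      (Finset.sum_eq_zero_iff_of_nonneg hterm).mp hq j hj
    have hns : Complex.normSq ⟪φ j, x⟫ = 0 := by
      rcases mul_eq_zero.mp hj0 with h | h
      · linarith
      · exact h
    have ha : ⟪φ j, x⟫ = 0 := Complex.normSq_eq_zero.mp hns
    rw [← inner_conj_symm, ha, map_zero]
  have hjN : j ∉ N := by
    simp only [hNdef, Finset.mem_filter, not_and]
    intro _
    linarith
  have hT : (insert j N).card < s := by
    rw [Finset.card_insert_of_notMem hjN]
    omega
  have hind := hspark (insert j N) hT
  rw [Finsupp.mem_span_image_iff_linearCombination] at hmem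
  obtain ⟨l, hlsupp, hl⟩ := hmem
  rw [Finsupp.mem_supported] at hlsupp
  have key : ∑ i : (insert j N : Finset (Fin n)),
      (if (i : Fin n) = j then (-1 : ℂ) else l i) • φ i = 0 := by
    rw [Finset.sum_coe_sort (insert j N) (fun i => (if i = j then (-1 : ℂ) else l i) • φ i)]
    rw [Finset.sum_insert hjN, if_pos rfl]
    have hrest : ∑ i ∈ N, (if i = j then (-1 : ℂ) else l i) • φ i = φ j := by
      rw [← hl, Finsupp.linearCombination_apply, Finsupp.sum]
      rw [Finset.sum_subset hlsupp (fun i hiN hins => by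
        simp [Finsupp.notMem_support_iff.mp hins])]
      exact Finset.sum_congr rfl fun i hi => by
        rw [if_neg (fun h : i = j => hjN (h ▸ hi))]
    rw [hrest]
    simp
  have := Fintype.linearIndependent_iff.mp hind _ key
    ⟨j, Finset.mem_insert_self j N⟩
  simp at this

theorem stmt14 {d n : ℕ} (s : ℕ) (hs : 2 ≤ s) (φ : Fin n → EuclideanSpace ℂ (Fin d))
    (hspark : ∀ I : Finset (Fin n), I.card < s →
        LinearIndependent ℂ (fun i : I => φ i)) :
    ∀ I : Finset (Fin n), I.card < 2 * s - 2 →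
      LinearIndependent ℝ (fun i : I => outer (φ i)) := by
  intro I hI
  rw [Fintype.linearIndependent_iff]
  intro g hg
  set c : Fin n → ℝ := fun i => if h : i ∈ I then g ⟨i, h⟩ else 0 with hc
  have hsum : ∑ i ∈ I, c i • outer (φ i) = 0 := by
    rw [← Finset.sum_attach I (fun i => c i • outer (φ i)), ← hg]
    exact Finset.sum_congr rfl fun i _ => by simp [hc, i.2]
  have hsum' : ∑ i ∈ I, (-c) i • outer (φ i) = 0 := by
    simp only [Pi.neg_apply, neg_smul, Finset.sum_neg_distrib, hsum, neg_zero]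
  set P := I.filter fun i => 0 < c i with hP
  set N := I.filter fun i => c i < 0 with hN
  have hPN : P.card + N.card ≤ I.card := by
    rw [← Finset.card_union_of_disjoint (by
      rw [Finset.disjoint_filter]
      intro x _ h1 h2
      linarith)]
    exact Finset.card_le_card (Finset.union_subset (Finset.filter_subset _ _)
      (Finset.filter_subset _ _))
  have hNeqP : I.filter (fun i => (-c) i < 0) = P := by
    refine Finset.filter_congr fun x _ => ?_
    simp
  have hfin : ∀ j ∈ I, c j = 0 := by
    rcases le_or_gt s (N.card + 1) with h | h
    · -- N is big, so P is small : P.card + 1 < s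
      have hPs : P.card + 1 < s := by omega
      have h1 : ∀ j ∈ I, (-c) j ≤ 0 := by
        apply aux_nonpos s φ hspark I (-c) hsum'
        rw [hNeqP]
        exact hPs
      -- now all c j ≥ 0, so N is empty
      have hNempty : I.filter (fun i => c i < 0) = ∅ := by
        rw [Finset.filter_eq_empty_iff]
        intro x hx
        have := h1 x hx
        simp only [Pi.neg_apply, neg_nonpos] at this
        linarith
      have h2 := aux_nonpos s φ hspark I c hsum (by rw [hNempty]; simp; omega)
      intro j hj
      have hb := h1 j hj
      simp only [Pi.neg_apply, neg_nonpos] at hb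
      exact le_antisymm (h2 j hj) hb
    · have h2 := aux_nonpos s φ hspark I c hsum h
      have hPempty : I.filter (fun i => (-c) i < 0) = ∅ := by
        rw [Finset.filter_eq_empty_iff]
        intro x hx
        have := h2 x hx
        simp only [Pi.neg_apply, not_lt]
        linarith
      have h1 : ∀ j ∈ I, (-c) j ≤ 0 := by
        apply aux_nonpos s φ hspark I (-c) hsum'
        rw [hPempty]
        simp; omega
      intro j hj
      have hb := h1 j hj
      simp only [Pi.neg_apply, neg_nonpos] at hb
      exact le_antisymm (h2 j hj) hb
  intro i
  have := hfin i i.2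
  simpa [hc, i.2] using this
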